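/- arXiv:1401.3403 — 5 statements merged into one kernel-verified Lean document; each statement's English description precedes it below -/
import Mathlib

section
/- Let g(t) = (∑_{k=1}^n a_k t^k) - 1 be a polynomial of degree n ≥ 2 with non-negative integer coefficients a_k such that the gcd of {k : a_k ≠ 0} equals 1. Then there exists a real number r₀ with 0 < r₀ < 1 which is a zero of g, and every complex zero z of g with z ≠ r₀ satisfies |z| > r₀. -/
private lemma re_eq_abs_imp (w : ℂ) (h : w.re = ‖w‖) :
    w = (‖w‖ : ℂ) := by
  have hsq : ‖w‖ ^ 2 = w.re * w.re + w.im * w.im := by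
    rw [Complex.sq_norm, Complex.normSq_apply]
  rw [← h] at hsq
  have him : w.im = 0 := by
    have h2 : w.im * w.im = 0 := by nlinarith [hsq]
    exact mul_self_eq_zero.mp h2
  apply Complex.ext
  · simpa using h
  · simp [him]

/-- Komori–Umemoto lemma: g(t) = (∑_{k=1}^n a_k t^k) - 1 with non-negative
integer coefficients, degree n ≥ 2, gcd of support 1, has a zero r₀ ∈ (0,1)
and every other complex zero has modulus > r₀. -/
theorem stmt_0 (n : ℕ) (hn : 2 ≤ n) (a : ℕ → ℕ) (han : a n ≠ 0)
    (hgcd : ((Finset.Icc 1 n).filter (fun k => a k ≠ 0)).gcd id = 1)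
    (g : ℂ → ℂ)
    (hg : ∀ z : ℂ, g z = (∑ k ∈ Finset.Icc 1 n, (a k : ℂ) * z ^ k) - 1) :
    ∃ r₀ : ℝ, 0 < r₀ ∧ r₀ < 1 ∧ g r₀ = 0 ∧
      ∀ z : ℂ, g z = 0 → z ≠ (r₀ : ℂ) → r₀ < ‖z‖ := by
  classical
  set S := Finset.Icc 1 n with hS
  set T := S.filter (fun k => a k ≠ 0) with hT
  have hn1 : 1 ≤ n := by omega
  have hnS : n ∈ S := by simp [hS, Finset.mem_Icc, hn1]
  have hnT : n ∈ T := by simp [hT, Finset.mem_filter, hnS, han]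
  set F : ℝ → ℝ := fun x => (∑ k ∈ S, (a k : ℝ) * x ^ k) - 1 with hF
  have hcont : Continuous F := by
    apply Continuous.sub _ continuous_const
    exact continuous_finset_sum _ (fun k _ => by continuity)
  have hmono : StrictMonoOn F (Set.Ici 0) := by
    intro x hx y hy hxy
    have hsum : ∑ k ∈ S, (a k : ℝ) * x ^ k < ∑ k ∈ S, (a k : ℝ) * y ^ k := by
      apply Finset.sum_lt_sum
      · intro i hi
        exact mul_le_mul_of_nonneg_left (pow_le_pow_left₀ hx hxy.le i)
          (Nat.cast_nonneg _)
      · refine ⟨n, hnS, ?_⟩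
        have h1 : x ^ n < y ^ n := pow_lt_pow_left₀ hxy hx (by omega)
        have h2 : (0:ℝ) < (a n : ℝ) := by
          exact_mod_cast Nat.pos_of_ne_zero han
        exact (mul_lt_mul_iff_right₀ h2).mpr h1
    simpa [hF] using sub_lt_sub_right hsum 1
  have hF0 : F 0 = -1 := by
    have : ∑ k ∈ S, (a k : ℝ) * (0:ℝ) ^ k = 0 := by
      apply Finset.sum_eq_zero
      intro k hk
      have hk1 : 1 ≤ k := (Finset.mem_Icc.mp hk).1
      rw [zero_pow (by omega), mul_zero]
    simp [hF, this]
  -- there is some m in T with m ≠ n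
  have hm : ∃ m ∈ T, m ≠ n := by
    by_contra h
    push_neg at h
    have : n ∣ T.gcd id := by
      apply Finset.dvd_gcd
      intro m hmT
      simp [h m hmT]
    rw [hgcd] at this
    have := Nat.le_of_dvd one_pos this
    omega
  obtain ⟨m, hmT, hmn⟩ := hm
  have hmS : m ∈ S := (Finset.mem_filter.mp hmT).1
  have ham : a m ≠ 0 := (Finset.mem_filter.mp hmT).2
  have hsum2 : 2 ≤ ∑ k ∈ S, a k := by
    have hsub : ({m, n} : Finset ℕ) ⊆ S := by
      intro x hx
      simp only [Finset.mem_insert, Finset.mem_singleton] at hx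
      rcases hx with rfl | rfl <;> assumption
    have := Finset.sum_le_sum_of_subset (f := a) hsub
    rw [Finset.sum_pair hmn] at this
    omega
  have hF1 : 0 < F 1 := by
    have : (∑ k ∈ S, (a k : ℝ) * (1:ℝ) ^ k) = ((∑ k ∈ S, a k : ℕ) : ℝ) := by
      push_cast; simp
    have h2 : (2:ℝ) ≤ ((∑ k ∈ S, a k : ℕ) : ℝ) := by exact_mod_cast hsum2
    simp only [hF, this]
    linarith
  -- IVT
  have hIoo : (0:ℝ) ∈ F '' Set.Ioo 0 1 := by
    apply intermediate_value_Ioo (by norm_num) hcont.continuousOn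
    rw [hF0]
    exact ⟨by norm_num, hF1⟩
  obtain ⟨r₀, ⟨hr0, hr1⟩, hFr⟩ := hIoo
  have hFr0 : F r₀ = 0 := hFr
  have hgr : g (r₀ : ℂ) = ((F r₀ : ℝ) : ℂ) := by
    rw [hg, hF]
    push_cast
    ring
  refine ⟨r₀, hr0, hr1, by rw [hgr, hFr0]; simp, ?_⟩
  intro z hz hne
  have hzsum : ∑ k ∈ S, (a k : ℂ) * z ^ k = 1 := by
    have := hg z
    rw [hz] at this
    linear_combination -this
  set R := ‖z‖ with hR
  have hRe : ∑ k ∈ S, (a k : ℝ) * (z ^ k).re = 1 := by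
    have := congrArg Complex.re hzsum
    simpa [Complex.re_sum] using this
  have hterm : ∀ k ∈ S, (a k : ℝ) * (z ^ k).re ≤ (a k : ℝ) * R ^ k := by
    intro k hk
    apply mul_le_mul_of_nonneg_left _ (Nat.cast_nonneg _)
    calc (z ^ k).re ≤ ‖z ^ k‖ := Complex.re_le_norm _
      _ = R ^ k := by rw [norm_pow]
  have hFR : 0 ≤ F R := by
    have h1 : (1:ℝ) ≤ ∑ k ∈ S, (a k : ℝ) * R ^ k := by
      rw [← hRe]
      exact Finset.sum_le_sum hterm
    simp only [hF]
    linarith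
  have hRge : r₀ ≤ R := by
    by_contra h
    push_neg at h
    have := hmono (Set.mem_Ici.mpr (norm_nonneg z)) (Set.mem_Ici.mpr hr0.le) h
    rw [hFr0] at this
    linarith
  rcases lt_or_eq_of_le hRge with h | h
  · exact h
  -- equality case: R = r₀
  exfalso
  have hReq : R = r₀ := h.symm
  have hFReq : F R = 0 := by rw [hReq, hFr0]
  have hsumeq : ∑ k ∈ S, (a k : ℝ) * R ^ k = ∑ k ∈ S, (a k : ℝ) * (z ^ k).re := by
    have h1 : ∑ k ∈ S, (a k : ℝ) * R ^ k = 1 := by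
      simp only [hF] at hFReq; linarith
    rw [h1, hRe]
  have heach : ∀ k ∈ S, (a k : ℝ) * R ^ k = (a k : ℝ) * (z ^ k).re := by
    intro k hk
    have := (Finset.sum_eq_sum_iff_of_le hterm).mp hsumeq.symm k hk
    linarith
  have hzk : ∀ k ∈ T, z ^ k = ((r₀ : ℂ)) ^ k := by
    intro k hkT
    have hkS : k ∈ S := (Finset.mem_filter.mp hkT).1
    have hak : a k ≠ 0 := (Finset.mem_filter.mp hkT).2
    have hak' : (a k : ℝ) ≠ 0 := Nat.cast_ne_zero.mpr hak
    have hre : (z ^ k).re = R ^ k := (mul_left_cancel₀ hak' (heach k hkS)).symm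
    have habs : ‖z ^ k‖ = R ^ k := by rw [norm_pow]
    have := re_eq_abs_imp (z ^ k) (by rw [hre, habs])
    rw [habs, hReq] at this
    rw [this]
    push_cast
    ring
  have hr₀ne : (r₀ : ℂ) ≠ 0 := by exact_mod_cast hr0.ne'
  set u : ℂ := z / (r₀ : ℂ) with hu
  have hu1 : ∀ k ∈ T, u ^ k = 1 := by
    intro k hkT
    rw [hu, div_pow, hzk k hkT, div_self (pow_ne_zero _ hr₀ne)]
  have hord : orderOf u ∣ 1 := by
    rw [← hgcd]
    apply Finset.dvd_gcd
    intro k hkT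
    exact orderOf_dvd_of_pow_eq_one (hu1 k hkT)
  have : u = 1 := orderOf_eq_one_iff.mp (Nat.eq_one_of_dvd_one hord)
  rw [hu, div_eq_one_iff_eq hr₀ne] at this
  exact hne this
end

section
/- For the infinite cyclic group ℤ with generating set {1, p} where p = 2n+1 is odd, every element g has a unique expression g = i·p + j with -n ≤ j ≤ n, and the word length of g equals |i| + |j|. -/
/-- Word length on `ℤ` with respect to a (symmetrized) generating set `S`. -/
noncomputable def wordLengthZ (S : Set ℤ) (g : ℤ) : ℕ :=
  sInf {n : ℕ | ∃ w : List ℤ, w.length = n ∧ (∀ x ∈ w, x ∈ S ∨ -x ∈ S) ∧ w.sum = g}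

lemma decomp_aux (n : ℕ) (w : List ℤ)
    (hw : ∀ x ∈ w, x ∈ ({1, 2*(n:ℤ)+1} : Set ℤ) ∨ -x ∈ ({1, 2*(n:ℤ)+1} : Set ℤ)) :
    ∃ u v : ℤ, w.sum = u * (2*n+1) + v ∧ u.natAbs + v.natAbs ≤ w.length := by
  induction w with
  | nil => exact ⟨0, 0, by simp, by simp⟩
  | cons a w ih =>
    obtain ⟨u, v, hs, hl⟩ := ih (fun x hx => hw x (List.mem_cons_of_mem a hx))
    have ha := hw a (List.mem_cons_self)
    simp only [Set.mem_insert_iff, Set.mem_singleton_iff, neg_eq_iff_eq_neg] at ha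
    rcases ha with (rfl | rfl) | (rfl | rfl)
    · refine ⟨u, v + 1, by simp [hs]; ring, ?_⟩
      have := Int.natAbs_add_le v 1
      simp at this ⊢; omega
    · refine ⟨u + 1, v, by simp [hs]; ring, ?_⟩
      have := Int.natAbs_add_le u 1
      simp at this ⊢; omega
    · refine ⟨u, v - 1, by simp [hs]; ring, ?_⟩
      have := Int.natAbs_sub_le v 1
      simp at this ⊢; omega
    · refine ⟨u - 1, v, by simp [hs]; ring, ?_⟩
      have := Int.natAbs_sub_le u 1
      simp at this ⊢; omega

lemma lower_aux (n : ℕ) (hn : 1 ≤ n) (i j u v : ℤ)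
    (h : i * (2*n+1) + j = u * (2*n+1) + v) (hj : j.natAbs ≤ n) :
    i.natAbs + j.natAbs ≤ u.natAbs + v.natAbs := by
  have hv : v = j + (i - u) * (2*(n:ℤ)+1) := by linear_combination -h
  set k := i - u with hk
  by_cases hk0 : k = 0
  · have hui : u = i := by omega
    subst hui
    have : v = j := by rw [hv, hk0]; ring
    simp [this]
  · have h1 : (1:ℤ) ≤ |k| := Int.one_le_abs hk0
    have h2 : |i| - |k| ≤ |u| := by
      have hik : |i| = |u + k| := by rw [hk]; ring_nf
      calc |i| - |k| = |u + k| - |k| := by rw [hik]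
        _ ≤ |u + k - k| := by
            have := abs_sub_abs_le_abs_sub (u + k) k
            simpa using this
        _ = |u| := by ring_nf
    have h3 : |k| * (2*n+1) - |j| ≤ |v| := by
      have h5 : |k * (2*(n:ℤ)+1)| ≤ |v| + |j| := by
        have h6 : k * (2*(n:ℤ)+1) = v - j := by rw [hv]; ring
        rw [h6]
        exact abs_sub v j
      rw [abs_mul] at h5
      have hp : |(2*(n:ℤ)+1)| = 2*n+1 := abs_of_pos (by positivity)
      rw [hp] at h5
      linarith
    have h4 : |j| ≤ n := by rw [abs_le]; omega
    suffices hs : (i.natAbs : ℤ) + j.natAbs ≤ (u.natAbs : ℤ) + v.natAbs by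
      exact_mod_cast hs
    rw [← Int.abs_eq_natAbs, ← Int.abs_eq_natAbs, ← Int.abs_eq_natAbs, ← Int.abs_eq_natAbs]
    nlinarith [mul_le_mul_of_nonneg_right h1 (show (0:ℤ) ≤ 2*n by positivity)]

/-- For `ℤ` with generating set `{1, p}`, `p = 2n+1` odd, every element `g`
has a unique expression `g = i·p + j` with `-n ≤ j ≤ n`, and for this
expression the word length of `g` equals `|i| + |j|`. -/
theorem stmt_7 (n : ℕ) (hn : 1 ≤ n) (g : ℤ) :
    (∃! ij : ℤ × ℤ, g = ij.1 * (2 * n + 1) + ij.2 ∧ ij.2.natAbs ≤ n) ∧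
    ∀ i j : ℤ, g = i * (2 * n + 1) + j → j.natAbs ≤ n →
      wordLengthZ {1, (2 * (n : ℤ) + 1)} g = i.natAbs + j.natAbs := by
  have hp : (0:ℤ) < 2*n+1 := by positivity
  have uniq : ∀ i1 j1 i2 j2 : ℤ, i1*(2*(n:ℤ)+1)+j1 = i2*(2*(n:ℤ)+1)+j2 →
      j1.natAbs ≤ n → j2.natAbs ≤ n → i1 = i2 ∧ j1 = j2 := by
    intro i1 j1 i2 j2 h h1 h2
    have hd : (i1 - i2) * (2*(n:ℤ)+1) = j2 - j1 := by linear_combination h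
    have hb1 : -(n:ℤ) ≤ j1 ∧ j1 ≤ n := by omega
    have hb2 : -(n:ℤ) ≤ j2 ∧ j2 ≤ n := by omega
    have hi : i1 = i2 := by
      rcases lt_trichotomy (i1 - i2) 0 with hlt | heq | hgt
      · exfalso
        have : i1 - i2 ≤ -1 := by omega
        nlinarith
      · omega
      · exfalso
        have : 1 ≤ i1 - i2 := by omega
        nlinarith
    subst hi
    refine ⟨rfl, ?_⟩
    have : (0:ℤ) = j2 - j1 := by simpa using hd
    omega
  constructor
  · set r := (g + n) % (2*n+1) with hr
    set i0 := (g + n) / (2*n+1) with hi0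
    have hdm : (2*(n:ℤ)+1) * i0 + r = g + n := Int.mul_ediv_add_emod (g+n) (2*n+1)
    have hr0 : 0 ≤ r := Int.emod_nonneg _ (by positivity)
    have hr1 : r < 2*n+1 := Int.emod_lt_of_pos _ hp
    refine ⟨(i0, r - n), ⟨by simp; linarith, by simp; omega⟩, ?_⟩
    rintro ⟨i2, j2⟩ ⟨he, hb⟩
    simp only at he hb
    have := uniq i2 j2 i0 (r - n) (by rw [← he]; linarith) hb (by omega)
    simp [this.1, this.2]
  · intro i j hg hj
    have hmem : (i.natAbs + j.natAbs) ∈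
        {m : ℕ | ∃ w : List ℤ, w.length = m ∧
          (∀ x ∈ w, x ∈ ({1, 2*(n:ℤ)+1} : Set ℤ) ∨ -x ∈ ({1, 2*(n:ℤ)+1} : Set ℤ)) ∧
          w.sum = g} := by
      refine ⟨List.replicate i.natAbs (if 0 ≤ i then (2*(n:ℤ)+1) else -(2*(n:ℤ)+1)) ++
        List.replicate j.natAbs (if 0 ≤ j then (1:ℤ) else -1), by simp, ?_, ?_⟩
      · intro x hx
        simp only [List.mem_append, List.mem_replicate] at hx
        rcases hx with ⟨_, rfl⟩ | ⟨_, rfl⟩ <;> split <;> simp [Set.mem_insert_iff]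
      · rw [List.sum_append, List.sum_replicate, List.sum_replicate,
          nsmul_eq_mul, nsmul_eq_mul, hg]
        rcases le_or_gt 0 i with hi | hi <;> rcases le_or_gt 0 j with hj2 | hj2
        · rw [if_pos hi, if_pos hj2]
          have e1 : (i.natAbs : ℤ) = i := by omega
          have e2 : (j.natAbs : ℤ) = j := by omega
          rw [e1, e2]; ring
        · rw [if_pos hi, if_neg (not_le.mpr hj2)]
          have e1 : (i.natAbs : ℤ) = i := by omega
          have e2 : (j.natAbs : ℤ) = -j := by omega
          rw [e1, e2]; ring
        · rw [if_neg (not_le.mpr hi), if_pos hj2]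
          have e1 : (i.natAbs : ℤ) = -i := by omega
          have e2 : (j.natAbs : ℤ) = j := by omega
          rw [e1, e2]; ring
        · rw [if_neg (not_le.mpr hi), if_neg (not_le.mpr hj2)]
          have e1 : (i.natAbs : ℤ) = -i := by omega
          have e2 : (j.natAbs : ℤ) = -j := by omega
          rw [e1, e2]; ring
    apply le_antisymm
    · exact Nat.sInf_le hmem
    · apply le_csInf ⟨_, hmem⟩
      rintro m ⟨w, hlen, hmemw, hsum⟩
      obtain ⟨u, v, hs, hl⟩ := decomp_aux n w hmemw
      have := lower_aux n hn i j u v (by rw [hsum, hg] at hs; exact hs) hj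
      omega
end

section
/- For the infinite cyclic group ℤ with generating set S = {1, p} where p = 2n is even, the word length of g = i·p + j (with -n < j ≤ n when i ≥ 0, and -n ≤ j < n when i < 0, j chosen with |j| ≤ n) equals |i| + |j|; equivalently, l_S(g) = min over all representations g = i·p + j of |i| + |j|. -/
lemma decompose_word (p : ℤ) (w : List ℤ)
    (hw : ∀ x ∈ w, x ∈ ({1, p} : Set ℤ) ∨ -x ∈ ({1, p} : Set ℤ)) :
    ∃ i j : ℤ, w.sum = i * p + j ∧ i.natAbs + j.natAbs ≤ w.length := by
  induction w with
  | nil => exact ⟨0, 0, by simp, by simp⟩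
  | cons x t ih =>
    obtain ⟨i, j, hsum, hlen⟩ := ih (fun y hy => hw y (List.mem_cons_of_mem _ hy))
    have hx := hw x List.mem_cons_self
    simp only [Set.mem_insert_iff, Set.mem_singleton_iff] at hx
    rcases hx with (rfl | rfl) | (h | h)
    · exact ⟨i, j + 1, by simp [List.sum_cons, hsum]; ring, by
        simp only [List.length_cons]; omega⟩
    · exact ⟨i + 1, j, by simp [List.sum_cons, hsum]; ring, by
        simp only [List.length_cons]; omega⟩
    · have hx1 : x = -1 := by linarith
      exact ⟨i, j - 1, by simp [List.sum_cons, hsum, hx1]; ring, by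
        simp only [List.length_cons]; omega⟩
    · have hxp : x = -p := by linarith
      exact ⟨i - 1, j, by simp [List.sum_cons, hsum, hxp]; ring, by
        simp only [List.length_cons]; omega⟩

lemma construct_word (p : ℤ) (i j : ℤ) :
    ∃ w : List ℤ, w.length = i.natAbs + j.natAbs ∧
      (∀ x ∈ w, x ∈ ({1, p} : Set ℤ) ∨ -x ∈ ({1, p} : Set ℤ)) ∧ w.sum = i * p + j := by
  refine ⟨List.replicate i.natAbs (i.sign * p) ++ List.replicate j.natAbs j.sign,
    by simp, ?_, ?_⟩
  · intro x hx
    simp only [List.mem_append, List.mem_replicate] at hx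
    rcases hx with ⟨hne, rfl⟩ | ⟨hne, rfl⟩
    · have hi : i ≠ 0 := by simpa using hne
      have hs : i.sign = 1 ∨ i.sign = -1 := by
        rcases lt_trichotomy i 0 with h | h | h
        · exact Or.inr (Int.sign_eq_neg_one_of_neg h)
        · exact absurd h hi
        · exact Or.inl (Int.sign_eq_one_of_pos h)
      rcases hs with h | h
      · left; right; simp [h]
      · right; right; simp [h]
    · have hj : j ≠ 0 := by simpa using hne
      have hs : j.sign = 1 ∨ j.sign = -1 := by
        rcases lt_trichotomy j 0 with h | h | h
        · exact Or.inr (Int.sign_eq_neg_one_of_neg h)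
        · exact absurd h hj
        · exact Or.inl (Int.sign_eq_one_of_pos h)
      rcases hs with h | h
      · left; left; simp [h]
      · right; left; simp [h]
  · simp only [List.sum_append, List.sum_replicate, nsmul_eq_mul]
    have h1 : (i.natAbs : ℤ) * (i.sign * p) = i * p := by
      rw [← mul_assoc, mul_comm (i.natAbs : ℤ) i.sign, Int.sign_mul_natAbs]
    have h2 : (j.natAbs : ℤ) * j.sign = j := by
      rw [mul_comm, Int.sign_mul_natAbs]
    rw [h1, h2]

/-- For `ℤ` with generating set `{1, p}`, `p = 2n` even, the word length of any
`g` is the minimum of `|i| + |j|` over all representations `g = i·p + j`. -/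
theorem stmt_8 (n : ℕ) (hn : 1 ≤ n) (g : ℤ) :
    wordLengthZ {1, (2 * (n : ℤ))} g =
      sInf {m : ℕ | ∃ i j : ℤ, g = i * (2 * n) + j ∧ m = i.natAbs + j.natAbs} := by
  set p : ℤ := 2 * (n : ℤ) with hp
  set A := {m : ℕ | ∃ w : List ℤ, w.length = m ∧
      (∀ x ∈ w, x ∈ ({1, p} : Set ℤ) ∨ -x ∈ ({1, p} : Set ℤ)) ∧ w.sum = g} with hA
  set B := {m : ℕ | ∃ i j : ℤ, g = i * p + j ∧ m = i.natAbs + j.natAbs} with hB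
  have hBA : B ⊆ A := by
    rintro m ⟨i, j, hg, rfl⟩
    obtain ⟨w, hlen, hmem, hsum⟩ := construct_word p i j
    exact ⟨w, hlen, hmem, by rw [hsum, hg]⟩
  have hBne : B.Nonempty := ⟨g.natAbs, 0, g, by ring, by simp⟩
  have hAne : A.Nonempty := ⟨_, hBA hBne.choose_spec⟩
  apply le_antisymm
  · exact csInf_le_csInf (OrderBot.bddBelow _) hBne hBA
  · obtain ⟨w, hlen, hmem, hsum⟩ := Nat.sInf_mem hAne
    obtain ⟨i, j, hij, hle⟩ := decompose_word p w hmem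
    have : i.natAbs + j.natAbs ∈ B := ⟨i, j, by rw [← hsum, hij], rfl⟩
    calc sInf B ≤ i.natAbs + j.natAbs := Nat.sInf_le this
      _ ≤ w.length := hle
      _ = sInf A := hlen
end

section
/- If g(t) = ∑_{k=1}^n a_k tᵏ − 1 has non-negative integer coefficients with a_n ≠ 0 and g has a unique zero r₀ of minimal modulus with 0 < r₀ < 1, then ω = 1/r₀ is a Perron number. -/
/-- A Perron number: a real algebraic integer `ω > 1` such that all other
roots of its minimal polynomial have modulus strictly less than `ω`. -/
def IsPerron (ω : ℝ) : Prop :=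
  1 < ω ∧ IsIntegral ℤ ω ∧
    ∀ z : ℂ, Polynomial.aeval z (minpoly ℚ ω) = 0 → z ≠ (ω : ℂ) →
      ‖z‖ < ω

/-- If `g(t) = ∑_{k=1}^n a_k t^k − 1` has non-negative integer coefficients
with `a_n ≠ 0`, and `g` has a zero `r₀ ∈ (0,1)` that is the unique zero of
minimal modulus, then `ω = 1/r₀` is a Perron number. -/
theorem stmt_15 (n : ℕ) (hn : 1 ≤ n) (a : ℕ → ℕ) (han : a n ≠ 0)
    (g : ℂ → ℂ)
    (hg : ∀ z : ℂ, g z = (∑ k ∈ Finset.Icc 1 n, (a k : ℂ) * z ^ k) - 1)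
    (r₀ : ℝ) (hr₀ : 0 < r₀) (hr₁ : r₀ < 1) (hroot : g r₀ = 0)
    (hmin : ∀ z : ℂ, g z = 0 → z ≠ (r₀ : ℂ) → r₀ < ‖z‖) :
    IsPerron (1 / r₀) := by
  have hr0 : (r₀ : ℝ) ≠ 0 := ne_of_gt hr₀
  have hω1 : 1 < 1 / r₀ := one_lt_one_div hr₀ hr₁
  -- real equation from the root
  have hS : ∑ k ∈ Finset.Icc 1 n, (a k : ℝ) * r₀ ^ k = 1 := by
    have h := hroot
    rw [hg] at h
    have h2 : ((∑ k ∈ Finset.Icc 1 n, (a k : ℝ) * r₀ ^ k : ℝ) : ℂ) = ((1 : ℝ) : ℂ) := by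
      push_cast
      linear_combination h
    exact_mod_cast h2
  -- the reciprocal polynomial
  set q : Polynomial ℤ :=
      Polynomial.X ^ n - ∑ k ∈ Finset.Icc 1 n, Polynomial.C ((a k : ℤ)) * Polynomial.X ^ (n - k)
      with hqdef
  have hmonic : q.Monic := by
    obtain ⟨m, rfl⟩ : ∃ m, n = m + 1 := ⟨n - 1, (Nat.succ_pred_eq_of_pos hn).symm⟩
    apply Polynomial.monic_X_pow_sub
    apply lt_of_le_of_lt (Polynomial.degree_sum_le _ _)
    apply lt_of_le_of_lt (b := (m : WithBot ℕ))
    · apply Finset.sup_le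
      intro k hk
      refine (Polynomial.degree_C_mul_X_pow_le _ _).trans ?_
      have hk1 := (Finset.mem_Icc.mp hk).1
      have hle : m + 1 - k ≤ m := by omega
      exact_mod_cast hle
    · exact_mod_cast Nat.cast_lt.mpr (Nat.lt_succ_self m)
  have haevalω : Polynomial.aeval (1 / r₀ : ℝ) q = 0 := by
    rw [hqdef]
    simp only [map_sub, map_pow, map_sum, map_mul, Polynomial.aeval_X, Polynomial.aeval_C,
      eq_intCast, Int.cast_natCast, map_intCast, map_natCast]
    have h1 : r₀ ^ n * ((1 / r₀ : ℝ) ^ n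
        - ∑ k ∈ Finset.Icc 1 n, (a k : ℝ) * (1 / r₀) ^ (n - k)) = 0 := by
      rw [mul_sub, Finset.mul_sum]
      have e1 : r₀ ^ n * (1 / r₀ : ℝ) ^ n = 1 := by
        rw [one_div, inv_pow, mul_inv_cancel₀ (pow_ne_zero n hr0)]
      have e2 : ∀ k ∈ Finset.Icc 1 n,
          r₀ ^ n * ((a k : ℝ) * (1 / r₀) ^ (n - k)) = (a k : ℝ) * r₀ ^ k := by
        intro k hk
        have hk2 := (Finset.mem_Icc.mp hk).2
        rw [one_div, inv_pow, pow_sub₀ r₀ hr0 hk2]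
        field_simp
      rw [e1, Finset.sum_congr rfl e2, hS, sub_self]
    have h2 := (mul_eq_zero.mp h1).resolve_left (pow_ne_zero n hr0)
    linear_combination h2
  have hint : IsIntegral ℤ (1 / r₀ : ℝ) := ⟨q, hmonic, by rwa [← Polynomial.aeval_def]⟩
  refine ⟨hω1, hint, ?_⟩
  intro z hz hzω
  have hdvd : minpoly ℚ (1 / r₀ : ℝ) ∣ q.map (algebraMap ℤ ℚ) :=
    minpoly.dvd ℚ _ (by rwa [Polynomial.aeval_map_algebraMap])
  obtain ⟨c, hc⟩ := hdvd
  have hzq : Polynomial.aeval z q = 0 := by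
    have h0 : Polynomial.aeval z (q.map (algebraMap ℤ ℚ)) = 0 := by
      rw [hc, map_mul, hz, zero_mul]
    rwa [Polynomial.aeval_map_algebraMap] at h0
  have heq : z ^ n - ∑ k ∈ Finset.Icc 1 n, (a k : ℂ) * z ^ (n - k) = 0 := by
    rw [hqdef] at hzq
    simpa only [map_sub, map_pow, map_sum, map_mul, Polynomial.aeval_X, Polynomial.aeval_C,
      eq_intCast, Int.cast_natCast, map_intCast, map_natCast] using hzq
  have hz0 : z ≠ 0 := by
    rintro rfl
    have hsum : ∑ k ∈ Finset.Icc 1 n, (a k : ℂ) * (0 : ℂ) ^ (n - k) = (a n : ℂ) := by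
      rw [Finset.sum_eq_single n]
      · simp
      · intro k hk hkn
        have hklt : k < n := lt_of_le_of_ne (Finset.mem_Icc.mp hk).2 hkn
        have : n - k ≠ 0 := Nat.sub_ne_zero_of_lt hklt
        simp [zero_pow this]
      · intro h
        exact absurd (Finset.mem_Icc.mpr ⟨hn, le_refl n⟩) h
    rw [hsum, zero_pow (by omega : n ≠ 0), zero_sub, neg_eq_zero] at heq
    exact han (by exact_mod_cast heq)
  have hzn : z ^ n ≠ 0 := pow_ne_zero _ hz0
  have hgw : g z⁻¹ = 0 := by
    rw [hg]
    have hmul : z ^ n * ((∑ k ∈ Finset.Icc 1 n, (a k : ℂ) * z⁻¹ ^ k) - 1) = 0 := by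
      rw [mul_sub, mul_one, Finset.mul_sum]
      have e2 : ∀ k ∈ Finset.Icc 1 n,
          z ^ n * ((a k : ℂ) * z⁻¹ ^ k) = (a k : ℂ) * z ^ (n - k) := by
        intro k hk
        have hk2 := (Finset.mem_Icc.mp hk).2
        rw [pow_sub₀ z hz0 hk2, inv_pow]
        ring
      rw [Finset.sum_congr rfl e2]
      linear_combination -heq
    exact (mul_eq_zero.mp hmul).resolve_left hzn
  by_cases hwr : z⁻¹ = (r₀ : ℂ)
  · exfalso
    apply hzω
    have hzz : z = ((r₀ : ℂ))⁻¹ := by rw [← hwr, inv_inv]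
    rw [hzz]
    push_cast
    rw [one_div]
  · have hlt := hmin z⁻¹ hgw hwr
    rw [norm_inv] at hlt
    have habs : 0 < ‖z‖ := norm_pos_iff.mpr hz0
    rw [one_div]
    calc ‖z‖ = (‖z‖⁻¹)⁻¹ := (inv_inv _).symm
      _ < r₀⁻¹ := by
        exact inv_strictAnti₀ hr₀ hlt
end

section
/- Let p, q > 1 and let T'_{p,q} = ⟨x, y, z | x^p = y^q = z⟩. The natural quotient map T'_{p,q} → ℤ/p * ℤ/q (sending z to the identity) has kernel equal to the center, which is the infinite cyclic group generated by z. -/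
open Monoid

namespace TorusAux

open CoprodI

variable {ι : Type*} [DecidableEq ι] {G : ι → Type*} [∀ i, Group (G i)] [∀ i, DecidableEq (G i)]

theorem equiv_mul (x y : CoprodI G) : Word.equiv (x * y) = x • Word.equiv y := by
  have h : ∀ z : CoprodI G, Word.equiv z = z • Word.empty := fun _ => rfl
  rw [h, h, mul_smul]

theorem equiv_prod (u : Word G) : Word.equiv u.prod = u := Word.equiv.apply_symm_apply u

theorem smul_toList {i : ι} (m : G i) (hm : m ≠ 1) (u : Word G) (h : u.fstIdx ≠ some i) :
    (CoprodI.of m • u).toList = ⟨i, m⟩ :: u.toList := by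
  rw [← Word.cons_eq_smul (h1 := h) (h2 := hm)]
  rfl

theorem rmul_toList (w : Word G) {k : ι} (t : G k) (ht : t ≠ 1) :
    (Word.equiv (w.prod * CoprodI.of t)).toList = w.toList ++ [⟨k, t⟩]
    ∨ (∃ (l₀ : List (Σ i, G i)) (y x : Σ i, G i), w.toList = l₀ ++ [y] ∧ x.1 = y.1 ∧
        (Word.equiv (w.prod * CoprodI.of t)).toList = l₀ ++ [x])
    ∨ (Word.equiv (w.prod * CoprodI.of t)).toList = w.toList.dropLast := by
  induction w using Word.consRecOn with
  | empty =>
      left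
      rw [Word.prod_empty, one_mul]
      have h1 : Word.equiv (CoprodI.of t) = (CoprodI.of t) • Word.empty := rfl
      rw [h1, smul_toList t ht _ (by simp [Word.fstIdx])]
      rfl
  | cons i m w h1 h2 ih =>
      set u := Word.equiv (w.prod * CoprodI.of t) with hu
      have hequiv : Word.equiv ((Word.cons m w h1 h2).prod * CoprodI.of t) = CoprodI.of m • u := by
        rw [Word.prod_cons, mul_assoc, equiv_mul, hu]
      rcases ih with h | ⟨l₀, y, x, hwl, hxy, h⟩ | h
      · -- shape 1
        cases hl : w.toList with
        | nil =>
          rw [hl] at h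
          by_cases hik : i = k
          · subst hik
            -- merge case : u is the single letter ⟨i, t⟩
            have hu1 : u = CoprodI.of t • Word.empty := by
              apply Word.ext
              rw [smul_toList t ht _ (by simp [Word.fstIdx]), h]
              rfl
            by_cases hmt : m * t = 1
            · right; right
              rw [hequiv, hu1, smul_smul, ← map_mul, hmt, map_one, one_smul]
              simp [hl]
            · right; left
              refine ⟨[], ⟨i, m⟩, ⟨i, m * t⟩, by simp [hl], rfl, ?_⟩
              rw [hequiv, hu1, smul_smul, ← map_mul,
                smul_toList (m * t) hmt _ (by simp [Word.fstIdx])]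
              rfl
          · left
            have hfi : u.fstIdx ≠ some i := by
              simp [Word.fstIdx, h]
              exact fun hh => hik hh.symm
            rw [hequiv, smul_toList m h2 u hfi, h]
            simp [hl]
        | cons a l' =>
          left
          have hfi : u.fstIdx ≠ some i := by
            rw [hl] at h
            have ha : a.1 ≠ i := by
              rw [Word.fstIdx, hl] at h1
              simpa [eq_comm] using h1
            simp [Word.fstIdx, h, ha]
          rw [hequiv, smul_toList m h2 u hfi, h]
          simp
      · -- shape 2
        right; left
        have hfi : u.fstIdx ≠ some i := by
          cases hl : l₀ with
          | nil =>
            rw [hl] at h hwl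
            have hy : y.1 ≠ i := by
              rw [Word.fstIdx, hwl] at h1
              simpa [eq_comm] using h1
            simp [Word.fstIdx, h, hxy, hy]
          | cons a l₀' =>
            rw [hl] at h hwl
            have ha : a.1 ≠ i := by
              rw [Word.fstIdx, hwl] at h1
              simpa [eq_comm] using h1
            simp [Word.fstIdx, h, ha]
        refine ⟨⟨i, m⟩ :: l₀, y, x, by simp [hwl], hxy, ?_⟩
        rw [hequiv, smul_toList m h2 u hfi, h]
        rfl
      · -- shape 3
        cases hl : w.toList with
        | nil =>
          right; left
          rw [hl] at h
          have hu1 : u = Word.empty := Word.ext (by simpa using h)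
          refine ⟨[], ⟨i, m⟩, ⟨i, m⟩, by simp [hl], rfl, ?_⟩
          rw [hequiv, hu1, smul_toList m h2 _ (by simp [Word.fstIdx])]
          rfl
        | cons a l' =>
          right; right
          cases hl' : l' with
          | nil =>
            rw [hl, hl'] at h
            have hu1 : u = Word.empty := Word.ext (by simpa using h)
            rw [hequiv, hu1, smul_toList m h2 _ (by simp [Word.fstIdx])]
            simp [hl, hl']
          | cons b l'' =>
            rw [hl, hl'] at h
            have hfi : u.fstIdx ≠ some i := by
              have ha : a.1 ≠ i := by
                rw [Word.fstIdx, hl] at h1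
                simpa [eq_comm] using h1
              simp [Word.fstIdx, h, ha]
            rw [hequiv, smul_toList m h2 u hfi, h]
            simp [hl, hl']

end TorusAux

namespace TorusAux

open CoprodI

theorem coprodI_center_bool {G : Bool → Type*} [∀ b, Group (G b)] [∀ b, Nontrivial (G b)]
    {x : CoprodI G} (hx : ∀ g, g * x = x * g) : x = 1 := by
  classical
  by_contra hx1
  set w := Word.equiv x with hw
  have hprodw : w.prod = x := Word.equiv.symm_apply_apply x
  have hlnil : w.toList ≠ [] := by
    intro hnil
    apply hx1
    have : w = Word.empty := Word.ext hnil
    rw [← hprodw, this, Word.prod_empty]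
  set i₀ := (w.toList.head hlnil).1 with hi₀
  have hfw : w.fstIdx = some i₀ := by
    rw [Word.fstIdx, List.head?_eq_head hlnil]
    rfl
  set k := !i₀ with hk
  have hki : k ≠ i₀ := by simp [hk]
  obtain ⟨t, ht⟩ := exists_ne (1 : G k)
  -- word of (of t * x)
  have hy : (Word.equiv (CoprodI.of t * x)).toList = ⟨k, t⟩ :: w.toList := by
    rw [equiv_mul, ← hw, smul_toList t ht w (by rw [hfw]; intro hcon; exact hki (Option.some.inj hcon).symm)]
  -- of t * x * of t⁻¹ = x
  have hcentral : (CoprodI.of t * x) * CoprodI.of t⁻¹ = x := by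
    rw [hx (CoprodI.of t), mul_assoc, ← map_mul, mul_inv_cancel, map_one, mul_one]
  have hprody : (Word.equiv (CoprodI.of t * x)).prod = CoprodI.of t * x :=
    Word.equiv.symm_apply_apply _
  have htinv : (t⁻¹ : G k) ≠ 1 := inv_ne_one.mpr ht
  have hmain := rmul_toList (Word.equiv (CoprodI.of t * x)) t⁻¹ htinv
  rw [hprody, hcentral, ← hw] at hmain
  -- in all cases, the head of w.toList is ⟨k, t⟩, contradicting k ≠ i₀
  have hhead : w.toList.head? = some ⟨k, t⟩ := by
    rcases hmain with h | ⟨l₀, y, x', hwl, hxy, h⟩ | h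
    · rw [h, hy]; rfl
    · rw [hy] at hwl
      cases l₀ with
      | nil =>
        exfalso
        simp at hwl
        exact hlnil hwl.2
      | cons a l₀' =>
        rw [List.cons_append] at hwl
        have ha : a = ⟨k, t⟩ := (List.cons.inj hwl).1.symm
        rw [h, List.cons_append, List.head?_cons, ha]
    · rw [hy] at h
      cases hcl : w.toList with
      | nil => exact absurd hcl hlnil
      | cons c rest =>
        rw [hcl, List.dropLast_cons₂] at h
        have hc : c = ⟨k, t⟩ := (List.cons.inj h).1
        rw [List.head?_cons, hc]
  have : i₀ = k := by
    rw [List.head?_eq_head hlnil] at hhead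
    have := congrArg Sigma.fst (Option.some.inj hhead)
    exact this
  exact hki this.symm

end TorusAux

namespace TorusAux

open CoprodI

section Transfer

universe u

variable {M N : Type u} [Group M] [Group N] [Nontrivial M] [Nontrivial N]

private abbrev GG (M N : Type u) : Bool → Type u := fun b => cond b M N

instance : ∀ b, Group (GG M N b) := fun b => by cases b <;> dsimp [GG] <;> infer_instance

instance : ∀ b, Nontrivial (GG M N b) := fun b => by cases b <;> dsimp [GG] <;> infer_instance

theorem coprod_center_triv {x : Coprod M N} (hx : x ∈ Subgroup.center (Coprod M N)) :
    x = 1 := by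
  classical
  let toI : Coprod M N →* CoprodI (GG M N) :=
    Coprod.lift (CoprodI.of (M := GG M N) (i := true)) (CoprodI.of (M := GG M N) (i := false))
  let fromI : CoprodI (GG M N) →* Coprod M N :=
    CoprodI.lift (fun b => Bool.rec (Coprod.inr : N →* Coprod M N)
      (Coprod.inl : M →* Coprod M N) b)
  have h1 : ∀ z, fromI (toI z) = z := by
    intro z
    induction z using Coprod.induction_on with
    | inl m =>
      rw [show toI (Coprod.inl m) = CoprodI.of (M := GG M N) (i := true) m from
        Coprod.lift_apply_inl .., CoprodI.lift_of]
    | inr n =>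
      rw [show toI (Coprod.inr n) = CoprodI.of (M := GG M N) (i := false) n from
        Coprod.lift_apply_inr .., CoprodI.lift_of]
    | mul a b ha hb => rw [map_mul, map_mul, ha, hb]
  have h2 : ∀ z, toI (fromI z) = z := by
    intro z
    induction z using CoprodI.induction_on with
    | one => simp
    | of i m =>
      cases i
      · rw [show fromI (CoprodI.of m) = Coprod.inr m from CoprodI.lift_of ..]
        exact Coprod.lift_apply_inr ..
      · rw [show fromI (CoprodI.of m) = Coprod.inl m from CoprodI.lift_of ..]
        exact Coprod.lift_apply_inl ..
    | mul a b ha hb => rw [map_mul, map_mul, ha, hb]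
  have hc : ∀ g, g * toI x = toI x * g := by
    intro g
    have := (Subgroup.mem_center_iff.mp hx) (fromI g)
    calc g * toI x = toI (fromI g * x) := by rw [map_mul, h2]
    _ = toI (x * fromI g) := by rw [this]
    _ = toI x * g := by rw [map_mul, h2]
  have := coprodI_center_bool hc
  have := congrArg fromI this
  rwa [h1, map_one] at this

end Transfer

end TorusAux


/-- Relations of `T'_{p,q} = ⟨x, y, z | x^p = y^q = z⟩`. -/
def torusRels (p q : ℕ) : Set (FreeGroup (Fin 3)) :=
  {FreeGroup.of 0 ^ p * (FreeGroup.of 2)⁻¹, FreeGroup.of 1 ^ q * (FreeGroup.of 2)⁻¹}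

/-- The natural quotient map `T'_{p,q} → ℤ/p ∗ ℤ/q` (sending `x`, `y` to the
generators and `z` to the identity) exists, and its kernel equals the center
of `T'_{p,q}`, which is the (infinite) cyclic subgroup generated by `z`. -/
theorem stmt_17 (p q : ℕ) (hp : 1 < p) (hq : 1 < q) :
    ∃ φ : PresentedGroup (torusRels p q) →*
        Coprod (Multiplicative (ZMod p)) (Multiplicative (ZMod q)),
      φ (PresentedGroup.of 0) = Coprod.inl (Multiplicative.ofAdd (1 : ZMod p)) ∧
      φ (PresentedGroup.of 1) = Coprod.inr (Multiplicative.ofAdd (1 : ZMod q)) ∧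
      φ (PresentedGroup.of 2) = 1 ∧
      Function.Surjective φ ∧
      φ.ker = Subgroup.center (PresentedGroup (torusRels p q)) ∧
      Subgroup.center (PresentedGroup (torusRels p q)) =
        Subgroup.zpowers (PresentedGroup.of 2) ∧
      ∀ k : ℤ, (PresentedGroup.of (2 : Fin 3) : PresentedGroup (torusRels p q)) ^ k = 1 →
        k = 0 := by
  haveI : Fact (1 < p) := ⟨hp⟩
  haveI : Fact (1 < q) := ⟨hq⟩
  haveI : NeZero p := ⟨by omega⟩
  haveI : NeZero q := ⟨by omega⟩
  set R := torusRels p q with hR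
  have hmk : ∀ r ∈ R, PresentedGroup.mk R r = 1 := fun r hr =>
    (QuotientGroup.eq_one_iff r).2 (Subgroup.subset_normalClosure hr)
  have hmem1 : (FreeGroup.of 0 ^ p * (FreeGroup.of 2)⁻¹ : FreeGroup (Fin 3)) ∈ R :=
    Set.mem_insert _ _
  have hmem2 : (FreeGroup.of 1 ^ q * (FreeGroup.of 2)⁻¹ : FreeGroup (Fin 3)) ∈ R :=
    Set.mem_insert_of_mem _ rfl
  have hz0 : (PresentedGroup.of (rels := R) 0) ^ p = PresentedGroup.of 2 := by
    have h := hmk _ hmem1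
    rw [map_mul, map_pow, map_inv] at h
    exact mul_inv_eq_one.mp h
  have hz1 : (PresentedGroup.of (rels := R) 1) ^ q = PresentedGroup.of 2 := by
    have h := hmk _ hmem2
    rw [map_mul, map_pow, map_inv] at h
    exact mul_inv_eq_one.mp h
  set z := (PresentedGroup.of 2 : PresentedGroup R) with hzdef
  -- z is central
  have hzc : z ∈ Subgroup.center (PresentedGroup R) := by
    have hcent : ∀ g : PresentedGroup R, g ∈ Subgroup.centralizer {z} := by
      apply PresentedGroup.generated_by
      intro j
      rw [Subgroup.mem_centralizer_iff]
      intro h hh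
      rw [Set.mem_singleton_iff] at hh
      subst hh
      fin_cases j
      · show z * PresentedGroup.of 0 = PresentedGroup.of 0 * z
        rw [← hz0]; exact pow_mul_comm' _ _
      · show z * PresentedGroup.of 1 = PresentedGroup.of 1 * z
        rw [← hz1]; exact pow_mul_comm' _ _
      · rfl
    rw [Subgroup.mem_center_iff]
    intro g
    have := Subgroup.mem_centralizer_iff.mp (hcent g) z (Set.mem_singleton z)
    exact this.symm
  -- the homomorphism φ
  have hpow1 : ∀ (n : ℕ) [NeZero n], (Multiplicative.ofAdd (1 : ZMod n)) ^ n = 1 := by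
    intro n _
    rw [← ofAdd_nsmul]
    simp [nsmul_eq_mul, ZMod.natCast_self]
  let fφ : Fin 3 → Coprod (Multiplicative (ZMod p)) (Multiplicative (ZMod q)) :=
    ![Coprod.inl (Multiplicative.ofAdd (1 : ZMod p)),
      Coprod.inr (Multiplicative.ofAdd (1 : ZMod q)), 1]
  have hrelφ : ∀ r ∈ R, FreeGroup.lift fφ r = 1 := by
    rintro r (rfl | rfl)
    · simp only [map_mul, map_pow, map_inv, FreeGroup.lift_apply_of]
      simp only [fφ, Matrix.cons_val_zero, Matrix.cons_val_two, Matrix.tail_cons,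
        Matrix.head_cons]
      rw [inv_one, mul_one, ← map_pow, hpow1, map_one]
    · simp only [map_mul, map_pow, map_inv, FreeGroup.lift_apply_of]
      simp only [fφ, Matrix.cons_val_one, Matrix.head_cons, Matrix.cons_val_two, Matrix.cons_val_zero,
        Matrix.tail_cons]
      rw [inv_one, mul_one, ← map_pow, hpow1, map_one]
  let φ := PresentedGroup.toGroup hrelφ
  have hφ0 : φ (PresentedGroup.of 0) = Coprod.inl (Multiplicative.ofAdd (1 : ZMod p)) :=
    PresentedGroup.toGroup.of hrelφ
  have hφ1 : φ (PresentedGroup.of 1) = Coprod.inr (Multiplicative.ofAdd (1 : ZMod q)) :=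
    PresentedGroup.toGroup.of hrelφ
  have hφ2 : φ z = 1 := PresentedGroup.toGroup.of hrelφ
  -- surjectivity
  have hsurj : Function.Surjective φ := by
    intro c
    induction c using Coprod.induction_on with
    | inl m =>
      refine ⟨(PresentedGroup.of 0) ^ (Multiplicative.toAdd m).val, ?_⟩
      have hm : (Multiplicative.ofAdd (1 : ZMod p)) ^ (Multiplicative.toAdd m).val = m := by
        rw [← ofAdd_nsmul]
        simp [nsmul_eq_mul, ZMod.natCast_val, ZMod.cast_id]
      rw [map_pow, hφ0, ← map_pow, hm]
    | inr m =>
      refine ⟨(PresentedGroup.of 1) ^ (Multiplicative.toAdd m).val, ?_⟩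
      have hm : (Multiplicative.ofAdd (1 : ZMod q)) ^ (Multiplicative.toAdd m).val = m := by
        rw [← ofAdd_nsmul]
        simp [nsmul_eq_mul, ZMod.natCast_val, ZMod.cast_id]
      rw [map_pow, hφ1, ← map_pow, hm]
    | mul x y hx hy =>
      obtain ⟨a, rfl⟩ := hx
      obtain ⟨b, rfl⟩ := hy
      exact ⟨a * b, map_mul _ _ _⟩
  -- the subgroup generated by z
  set N := Subgroup.zpowers z with hNdef
  have hNle : N ≤ Subgroup.center (PresentedGroup R) := Subgroup.zpowers_le.mpr hzc
  haveI hNnormal : N.Normal := by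
    constructor
    intro n hn g
    have hcomm := Subgroup.mem_center_iff.mp (hNle hn) g
    rw [hcomm, mul_assoc, mul_inv_cancel, mul_one]
    exact hn
  -- retraction ψ : Coprod → PresentedGroup R ⧸ N
  have hzN : (QuotientGroup.mk z : PresentedGroup R ⧸ N) = 1 :=
    (QuotientGroup.eq_one_iff z).2 (Subgroup.mem_zpowers z)
  set xbar : PresentedGroup R ⧸ N := QuotientGroup.mk (PresentedGroup.of 0) with hxbar_def
  set ybar : PresentedGroup R ⧸ N := QuotientGroup.mk (PresentedGroup.of 1) with hybar_def
  have hxbar : xbar ^ p = 1 := by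
    rw [hxbar_def, ← QuotientGroup.mk_pow, hz0]
    exact hzN
  have hybar : ybar ^ q = 1 := by
    rw [hybar_def, ← QuotientGroup.mk_pow, hz1]
    exact hzN
  let f1 : ℤ →+ Additive (PresentedGroup R ⧸ N) := zmultiplesHom _ (Additive.ofMul xbar)
  have hf1 : f1 (p : ℤ) = 0 := by
    show ((p : ℤ) • Additive.ofMul xbar) = 0
    rw [← ofMul_zpow, zpow_natCast, hxbar]
    rfl
  let f2 : ℤ →+ Additive (PresentedGroup R ⧸ N) := zmultiplesHom _ (Additive.ofMul ybar)
  have hf2 : f2 (q : ℤ) = 0 := by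
    show ((q : ℤ) • Additive.ofMul ybar) = 0
    rw [← ofMul_zpow, zpow_natCast, hybar]
    rfl
  let hom1 : Multiplicative (ZMod p) →* PresentedGroup R ⧸ N :=
    AddMonoidHom.toMultiplicativeLeft (ZMod.lift p ⟨f1, hf1⟩)
  let hom2 : Multiplicative (ZMod q) →* PresentedGroup R ⧸ N :=
    AddMonoidHom.toMultiplicativeLeft (ZMod.lift q ⟨f2, hf2⟩)
  have hhom1 : hom1 (Multiplicative.ofAdd (1 : ZMod p)) = xbar := by
    show Additive.toMul ((ZMod.lift p ⟨f1, hf1⟩) (1 : ZMod p)) = xbar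
    have h1 : ((1 : ℤ) : ZMod p) = (1 : ZMod p) := by push_cast; rfl
    rw [← h1, ZMod.lift_coe]
    show Additive.toMul ((1 : ℤ) • Additive.ofMul xbar) = xbar
    simp
  have hhom2 : hom2 (Multiplicative.ofAdd (1 : ZMod q)) = ybar := by
    show Additive.toMul ((ZMod.lift q ⟨f2, hf2⟩) (1 : ZMod q)) = ybar
    have h1 : ((1 : ℤ) : ZMod q) = (1 : ZMod q) := by push_cast; rfl
    rw [← h1, ZMod.lift_coe]
    show Additive.toMul ((1 : ℤ) • Additive.ofMul ybar) = ybar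
    simp
  let ψ : Coprod (Multiplicative (ZMod p)) (Multiplicative (ZMod q)) →*
      PresentedGroup R ⧸ N := Coprod.lift hom1 hom2
  have hψφ : ψ.comp φ = QuotientGroup.mk' N := by
    apply PresentedGroup.ext
    intro j
    fin_cases j
    · show ψ (φ (PresentedGroup.of 0)) = _
      rw [hφ0]
      show hom1 (Multiplicative.ofAdd (1 : ZMod p)) = _
      rw [hhom1]
      rfl
    · show ψ (φ (PresentedGroup.of 1)) = _
      rw [hφ1]
      show hom2 (Multiplicative.ofAdd (1 : ZMod q)) = _
      rw [hhom2]
      rfl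
    · show ψ (φ (PresentedGroup.of 2)) = _
      rw [show φ (PresentedGroup.of 2) = 1 from hφ2, map_one]
      exact hzN.symm
  -- kernel of φ is N
  have hker : φ.ker = N := by
    apply le_antisymm
    · intro g hg
      have h1 := DFunLike.congr_fun hψφ g
      rw [MonoidHom.comp_apply, MonoidHom.mem_ker.mp hg, map_one] at h1
      exact (QuotientGroup.eq_one_iff g).1 h1.symm
    · rw [hNdef, Subgroup.zpowers_le]
      exact MonoidHom.mem_ker.mpr hφ2
  -- center ≤ ker φ
  have hcle : Subgroup.center (PresentedGroup R) ≤ φ.ker := by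
    intro g hg
    have hgc : φ g ∈ Subgroup.center
        (Coprod (Multiplicative (ZMod p)) (Multiplicative (ZMod q))) := by
      rw [Subgroup.mem_center_iff]
      intro c
      obtain ⟨h, rfl⟩ := hsurj c
      rw [← map_mul, ← map_mul, Subgroup.mem_center_iff.mp hg h]
    exact MonoidHom.mem_ker.mpr (TorusAux.coprod_center_triv hgc)
  have hcenter : Subgroup.center (PresentedGroup R) = N :=
    le_antisymm (hker ▸ hcle) hNle
  -- z has infinite order
  have hinf : ∀ k : ℤ, z ^ k = 1 → k = 0 := by
    let fχ : Fin 3 → Multiplicative ℤ :=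
      ![Multiplicative.ofAdd (q : ℤ), Multiplicative.ofAdd (p : ℤ),
        Multiplicative.ofAdd ((p : ℤ) * q)]
    have hrelχ : ∀ r ∈ R, FreeGroup.lift fχ r = 1 := by
      rintro r (rfl | rfl)
      · simp only [map_mul, map_pow, map_inv, FreeGroup.lift_apply_of]
        rw [mul_inv_eq_one]
        simp only [fχ, Matrix.cons_val_zero, Matrix.cons_val_two, Matrix.tail_cons,
          Matrix.head_cons]
        rw [← ofAdd_nsmul]
        exact congrArg Multiplicative.ofAdd (by push_cast [nsmul_eq_mul]; ring)
      · simp only [map_mul, map_pow, map_inv, FreeGroup.lift_apply_of]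
        rw [mul_inv_eq_one]
        simp only [fχ, Matrix.cons_val_one, Matrix.head_cons, Matrix.cons_val_two, Matrix.cons_val_zero,
          Matrix.tail_cons]
        rw [← ofAdd_nsmul]
        exact congrArg Multiplicative.ofAdd (by push_cast [nsmul_eq_mul]; ring)
    let χ := PresentedGroup.toGroup hrelχ
    intro k hk
    have hχz : χ z = Multiplicative.ofAdd ((p : ℤ) * q) := PresentedGroup.toGroup.of hrelχ
    have h1 := congrArg χ hk
    rw [map_zpow, hχz, map_one, ← ofAdd_zsmul] at h1
    have h2 : k • ((p : ℤ) * q) = 0 := by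
      have := Multiplicative.ofAdd.injective (h1.trans (ofAdd_zero).symm)
      exact this
    rw [zsmul_eq_mul] at h2
    rcases mul_eq_zero.mp h2 with h | h
    · exact_mod_cast h
    · exfalso
      have : (0:ℤ) < (p : ℤ) * q := by positivity
      omega
  exact ⟨φ, hφ0, hφ1, hφ2, hsurj, hker.trans hcenter.symm, hcenter.trans rfl, hinf⟩
end
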